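/- A composition α is (i,z)-removable if and only if c_{i,J̃(i,z)}(α) = α_i − α_{J̃(i,z)} − z, where J̃(i,z) is the greatest j > i such that c_{i,j}(α) = c_{i,j}(α̃) and α̃ is obtained from α by replacing α_i with α_i − z. -/
import Mathlib


/-- The matrix `c_{i,j}(α)` defined recursively in `j`. -/
def cmat (α : ℕ → ℕ) (i : ℕ) : ℕ → ℕ
  | 0 => 0
  | j + 1 =>
    if j + 1 ≤ i + 1 then 0
    else cmat α i j + if α j < α i - cmat α i j then 1 else 0

/-- `α` covers `α'` in position `(i,j)`: conditions (a1)–(a4). -/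
def CoversAt (α α' : ℕ → ℕ) (i j : ℕ) : Prop :=
  1 ≤ i ∧ i < j ∧
  α' i + 1 ≤ α i ∧
  α' j + α' i + 1 = α j + α i ∧
  (∀ k, k ≠ i → k ≠ j → α' k = α k) ∧
  cmat α i j = cmat α' i j ∧
  cmat α i j + α j = α' i

/-- `α` is `(i,z)`-removable. -/
def IsRemovable (α : ℕ → ℕ) (i z : ℕ) : Prop :=
  ∃ α' j, CoversAt α α' i j ∧ α' i + z = α i

/-- `J̃(i,z)`: the greatest `j > i` such that `c_{i,j}(α) = c_{i,j}(α̃)`,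
where `α̃` is `α` with `α_i` replaced by `α_i - z`. -/
noncomputable def Jt (α : ℕ → ℕ) (i z : ℕ) : ℕ :=
  sSup {j | i < j ∧ cmat α i j = cmat (Function.update α i (α i - z)) i j}

lemma cmat_zero (α : ℕ → ℕ) (i j : ℕ) (h : j ≤ i + 1) : cmat α i j = 0 := by
  cases j with
  | zero => rfl
  | succ j => rw [cmat, if_pos h]

lemma cmat_succ (α : ℕ → ℕ) (i j : ℕ) (h : i + 1 ≤ j) :
    cmat α i (j + 1) = cmat α i j + if α j < α i - cmat α i j then 1 else 0 := by
  rw [cmat, if_neg (by omega)]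

lemma cmat_le (α : ℕ → ℕ) (i : ℕ) : ∀ j, cmat α i j ≤ α i := by
  intro j
  induction j with
  | zero => simp [cmat]
  | succ j ih =>
    by_cases h : j + 1 ≤ i + 1
    · rw [cmat_zero α i _ h]; omega
    · rw [cmat_succ α i j (by omega)]
      split_ifs with hc <;> omega

lemma cmat_congr (α β : ℕ → ℕ) (i : ℕ) (hi : α i = β i) :
    ∀ j, (∀ t, i < t → t < j → α t = β t) → cmat α i j = cmat β i j := by
  intro j
  induction j with
  | zero => intro _; rfl
  | succ j ih =>
    intro h
    by_cases hj : j + 1 ≤ i + 1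
    · rw [cmat_zero α i _ hj, cmat_zero β i _ hj]
    · rw [cmat_succ α i j (by omega), cmat_succ β i j (by omega),
        ih (fun t ht1 ht2 => h t ht1 (by omega)), h j (by omega) (by omega), hi]

lemma sandwich (α : ℕ → ℕ) (i z : ℕ) :
    ∀ j, cmat (Function.update α i (α i - z)) i j ≤ cmat α i j ∧
      cmat α i j ≤ cmat (Function.update α i (α i - z)) i j + z := by
  set β := Function.update α i (α i - z) with hβ
  have hβi : β i = α i - z := Function.update_self _ _ _
  intro j
  induction j with
  | zero => simp [cmat]
  | succ j ih =>
    by_cases h : j + 1 ≤ i + 1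
    · rw [cmat_zero α i _ h, cmat_zero β i _ h]; omega
    · have hβj : β j = α j := Function.update_of_ne (by omega) _ _
      rw [cmat_succ α i j (by omega), cmat_succ β i j (by omega), hβi, hβj]
      split_ifs with h1 h2 h2 <;> omega

lemma gap_mono (α : ℕ → ℕ) (i z j : ℕ) (hj : i + 1 ≤ j)
    (hgap : cmat (Function.update α i (α i - z)) i j < cmat α i j) :
    ∀ k, j ≤ k → cmat (Function.update α i (α i - z)) i k < cmat α i k := by
  set β := Function.update α i (α i - z) with hβ
  have hβi : β i = α i - z := Function.update_self _ _ _
  intro k hk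
  obtain ⟨d, rfl⟩ := Nat.exists_eq_add_of_le hk
  clear hk
  induction d with
  | zero => exact hgap
  | succ d ih =>
    have hβjd : β (j + d) = α (j + d) := Function.update_of_ne (by omega) _ _
    have hs := sandwich α i z (j + d)
    rw [← hβ] at hs
    have : j + (d + 1) = (j + d) + 1 := by omega
    rw [this, cmat_succ α i _ (by omega), cmat_succ β i _ (by omega), hβi, hβjd]
    split_ifs with h1 h2 h2 <;> omega

lemma cmat_ge (α : ℕ → ℕ) (i m : ℕ) (hm : ∀ k, m < k → α k = 0) (him : i ≤ m) :
    ∀ t, min (α i) t ≤ cmat α i (m + 1 + t) := by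
  intro t
  induction t with
  | zero => omega
  | succ t ih =>
    have h0 : α (m + 1 + t) = 0 := hm _ (by omega)
    have hle := cmat_le α i (m + 1 + t)
    have : m + 1 + (t + 1) = (m + 1 + t) + 1 := by omega
    rw [this, cmat_succ α i _ (by omega), h0]
    split_ifs with h1 <;> omega

/-- `α` is `(i,z)`-removable iff
`c_{i,J̃(i,z)}(α) = α_i - α_{J̃(i,z)} - z` (stated additively in `ℕ`). -/
theorem removable_iff (α : ℕ → ℕ) (hbd : ∃ m, ∀ k, m < k → α k = 0)
    (i z : ℕ) (hi : 1 ≤ i) (hz1 : 1 ≤ z) (hz2 : z ≤ α i) :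
    IsRemovable α i z ↔
      cmat α i (Jt α i z) + α (Jt α i z) + z = α i := by
  obtain ⟨m, hm⟩ := hbd
  set β := Function.update α i (α i - z) with hβ
  have hβi : β i = α i - z := Function.update_self _ _ _
  have hβk : ∀ k, k ≠ i → β k = α k := fun k hk => Function.update_of_ne hk _ _
  have him : i ≤ m := by
    by_contra h
    have := hm i (by omega)
    omega
  set S : Set ℕ := {j | i < j ∧ cmat α i j = cmat β i j} with hS
  have hJ : Jt α i z = sSup S := rfl
  have hne : (i + 1) ∈ S := by
    constructor
    · omega
    · rw [cmat_zero α i _ le_rfl, cmat_zero β i _ le_rfl]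
  have hbdd : ∀ j ∈ S, j ≤ m + α i := by
    intro j hj
    by_contra hc
    obtain ⟨t, rfl⟩ : ∃ t, j = m + 1 + t := ⟨j - (m + 1), by omega⟩
    have h1 := cmat_ge α i m hm him t
    have h2 := cmat_le α i (m + 1 + t)
    have h3 := cmat_le β i (m + 1 + t)
    rw [hβi] at h3
    have ht : α i ≤ t := by omega
    have heq := hj.2
    omega
  have hbddS : BddAbove S := ⟨m + α i, hbdd⟩
  have hJmem : Jt α i z ∈ S := by
    rw [hJ]; exact Nat.sSup_mem ⟨i + 1, hne⟩ hbddS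
  have hJmax : ∀ j ∈ S, j ≤ Jt α i z := fun j hj => le_csSup hbddS hj
  obtain ⟨hJi, hJeq⟩ := hJmem
  constructor
  · rintro ⟨α', j, ⟨-, hij, h3, h4, h5, h6, h7⟩, hz'⟩
    have hα'i : α' i = α i - z := by omega
    have hcc : cmat α' i j = cmat β i j := by
      refine cmat_congr α' β i (by rw [hα'i, hβi]) j (fun t ht1 ht2 => ?_)
      rw [h5 t (by omega) (by omega), hβk t (by omega)]
    have hjS : j ∈ S := ⟨hij, h6.trans hcc⟩
    have hjJ : j ≤ Jt α i z := hJmax j hjS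
    -- show j = Jt α i z
    rcases eq_or_lt_of_le hjJ with heq | hlt
    · rw [← heq]; omega
    · exfalso
      -- gap appears at j+1
      have hstep : cmat β i (j + 1) < cmat α i (j + 1) := by
        rw [cmat_succ α i j (by omega), cmat_succ β i j (by omega), hβi,
          hβk j (by omega)]
        have hc : cmat α i j = cmat β i j := hjS.2
        have h7' : cmat α i j + α j = α' i := h7
        split_ifs with h1 h2 h2 <;> omega
      have := gap_mono α i z (j + 1) (by omega) (by rw [← hβ]; exact hstep)
        (Jt α i z) (by omega)
      rw [← hβ] at this
      omega
  · intro h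
    set J := Jt α i z with hJdef
    set α' := Function.update β J (α J + z - 1) with hα'
    have hα'i : α' i = α i - z := by
      rw [hα', Function.update_of_ne (by omega), hβi]
    have hα'J : α' J = α J + z - 1 := Function.update_self _ _ _
    refine ⟨α', J, ⟨hi, hJi, by omega, by omega, ?_, ?_, ?_⟩, by omega⟩
    · intro k hki hkJ
      rw [hα', Function.update_of_ne hkJ, hβk k hki]
    · have : cmat α' i J = cmat β i J := by
        refine cmat_congr α' β i (by rw [hα'i, hβi]) J (fun t ht1 ht2 => ?_)
        rw [hα', Function.update_of_ne (by omega)]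
      rw [this, ← hJeq]
    · omega
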